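/- Let C = {(x:y:z) ∈ ℙ²(ℂ) : x²·z - x·y² = 0} be the union of a smooth conic and a tangent line, and let p₁, …, pₙ ∈ C. If the stabilizer subgroup {g ∈ SL(3,ℂ) : g·C = C and g·pᵢ = pᵢ for all i} is infinite, then there exists k ∈ ℂ such that each pᵢ is either the tacnodal singularity (0:0:1) or lies on the line l = {(x:y:z) ∈ ℙ²(ℂ) : z = -k²·x + 2k·y}, which is tangent to the conic component of C. -/

import Mathlib

open Matrix

noncomputable section

/-- The special linear group `SL(3, ℂ)`. -/
abbrev SL3 := Matrix.SpecialLinearGroup (Fin 3) ℂ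

/-- The complex projective plane `ℙ²(ℂ)`. -/
abbrev P2 := Projectivization ℂ (Fin 3 → ℂ)

/-- The action of `SL(3, ℂ)` on `ℙ²(ℂ)` induced by the linear action on `ℂ³`. -/
noncomputable def act (g : SL3) (p : P2) : P2 :=
  Projectivization.map (Matrix.SpecialLinearGroup.toLin' g).toLinearMap
    (Matrix.SpecialLinearGroup.toLin' g).injective p

/-- The union of a smooth conic and a tangent line, `{x²·z - x·y² = 0}`. -/
def Ctan : Set P2 := {p : P2 | p.rep 0 ^ 2 * p.rep 2 - p.rep 0 * p.rep 1 ^ 2 = 0}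

/-- The tacnodal point `(0:0:1)`. -/
def tacnode : P2 := Projectivization.mk ℂ ![0, 0, 1] (by
  intro h; simpa using congrFun h 2)

lemma mulVec_ne_zero (g : SL3) {v : Fin 3 → ℂ} (hv : v ≠ 0) :
    (g : Matrix (Fin 3) (Fin 3) ℂ).mulVec v ≠ 0 := by
  intro h
  have := Matrix.exists_mulVec_eq_zero_iff.mp ⟨v, hv, h⟩
  rw [g.2] at this
  exact one_ne_zero this

lemma mk_congr (v w : Fin 3 → ℂ) (h : v = w) (hv : v ≠ 0) (hw : w ≠ 0) :
    Projectivization.mk ℂ v hv = Projectivization.mk ℂ w hw := by subst h; rfl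

lemma act_mk (g : SL3) (v : Fin 3 → ℂ) (hv : v ≠ 0) :
    act g (Projectivization.mk ℂ v hv) =
      Projectivization.mk ℂ ((g : Matrix (Fin 3) (Fin 3) ℂ).mulVec v) (mulVec_ne_zero g hv) := by
  unfold act
  rw [Projectivization.map_mk]
  exact mk_congr _ _ (by simp [Matrix.SpecialLinearGroup.toLin'_to_linearMap,
    Matrix.toLin'_apply]) _ _

lemma smul_F (a : ℂˣ) (v : Fin 3 → ℂ) :
    (a • v) 0 ^ 2 * (a • v) 2 - (a • v) 0 * (a • v) 1 ^ 2
      = (a : ℂ) ^ 3 * (v 0 ^ 2 * v 2 - v 0 * v 1 ^ 2) := by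
  simp only [Units.smul_def, Pi.smul_apply, smul_eq_mul]; ring

lemma mem_Ctan_mk (v : Fin 3 → ℂ) (hv : v ≠ 0) :
    Projectivization.mk ℂ v hv ∈ Ctan ↔ v 0 ^ 2 * v 2 - v 0 * v 1 ^ 2 = 0 := by
  obtain ⟨a, ha⟩ := Projectivization.exists_smul_eq_mk_rep ℂ v hv
  have ha3 : (a : ℂ) ^ 3 ≠ 0 := pow_ne_zero _ a.ne_zero
  constructor
  · intro h
    have h' : (Projectivization.mk ℂ v hv).rep 0 ^ 2 * (Projectivization.mk ℂ v hv).rep 2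
        - (Projectivization.mk ℂ v hv).rep 0 * (Projectivization.mk ℂ v hv).rep 1 ^ 2 = 0 := h
    rw [← ha, smul_F] at h'
    exact (mul_eq_zero.mp h').resolve_left ha3
  · intro h
    show (Projectivization.mk ℂ v hv).rep 0 ^ 2 * (Projectivization.mk ℂ v hv).rep 2
        - (Projectivization.mk ℂ v hv).rep 0 * (Projectivization.mk ℂ v hv).rep 1 ^ 2 = 0
    rw [← ha, smul_F, h, mul_zero]


lemma scalar_finite :
    {g : SL3 | ∃ c : ℂ, (g : Matrix (Fin 3) (Fin 3) ℂ) = c • 1}.Finite := by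
  have hroots : {c : ℂ | c ^ 3 = 1}.Finite := by
    have hne : (Polynomial.X ^ 3 - Polynomial.C 1 : Polynomial ℂ) ≠ 0 :=
      Polynomial.X_pow_sub_C_ne_zero (by norm_num) 1
    apply (Polynomial.finite_setOf_isRoot hne).subset ?_
    intro c hc
    simp [Polynomial.IsRoot, sub_eq_zero, hc]
  apply Set.Finite.of_finite_image (f := fun g : SL3 => (g : Matrix (Fin 3) (Fin 3) ℂ) 0 0)
  · apply hroots.subset
    rintro x ⟨g, ⟨c, hc⟩, rfl⟩
    have hc00 : (g : Matrix (Fin 3) (Fin 3) ℂ) 0 0 = c := by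
      rw [hc]; simp [Matrix.smul_apply, Matrix.one_apply]
    have hdet : c ^ 3 = 1 := by
      have := g.2
      rw [hc, Matrix.det_smul, Matrix.det_one] at this
      simpa using this
    simpa [hc00] using hdet
  · rintro g ⟨c, hc⟩ g' ⟨c', hc'⟩ h
    have : c = c' := by
      have h1 : (g : Matrix (Fin 3) (Fin 3) ℂ) 0 0 = c := by
        rw [hc]; simp [Matrix.smul_apply, Matrix.one_apply]
      have h2 : (g' : Matrix (Fin 3) (Fin 3) ℂ) 0 0 = c' := by
        rw [hc']; simp [Matrix.smul_apply, Matrix.one_apply]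
      rw [← h1, ← h2]; exact h
    apply Subtype.ext
    rw [hc, hc', this]


lemma mulVec_entry (M : Matrix (Fin 3) (Fin 3) ℂ) (v : Fin 3 → ℂ) (i : Fin 3) :
    M.mulVec v i = M i 0 * v 0 + M i 1 * v 1 + M i 2 * v 2 := by
  simp [Matrix.mulVec, dotProduct, Fin.sum_univ_three]

lemma core (M : Matrix (Fin 3) (Fin 3) ℂ) (hdet : M.det = 1)
    (hC : ∀ v : Fin 3 → ℂ, v ≠ 0 → v 0 ^ 2 * v 2 - v 0 * v 1 ^ 2 = 0 →
      (M.mulVec v) 0 ^ 2 * (M.mulVec v) 2 - (M.mulVec v) 0 * (M.mulVec v) 1 ^ 2 = 0)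
    (hns : ¬ ∃ c : ℂ, M = c • (1 : Matrix (Fin 3) (Fin 3) ℂ)) :
    ∃ k : ℂ, ∀ v : Fin 3 → ℂ, v ≠ 0 → v 0 ^ 2 * v 2 - v 0 * v 1 ^ 2 = 0 →
      (∃ μ : ℂ, M.mulVec v = μ • v) →
      (v 0 = 0 ∧ v 1 = 0) ∨ v 2 = -k ^ 2 * v 0 + 2 * k * v 1 := by
  have key : ∀ t : ℂ,
      (M 0 1 + M 0 2*t)^2*(M 2 1 + M 2 2*t) - (M 0 1 + M 0 2*t)*(M 1 1 + M 1 2*t)^2 = 0 := by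
    intro t
    have h := hC ![0,1,t] (fun h => by simpa using congrFun h 1) (by norm_num)
    simp only [mulVec_entry, Matrix.cons_val_zero, Matrix.cons_val_one, Matrix.head_cons,
      Matrix.cons_val_two, Matrix.tail_cons] at h
    linear_combination h
  have h0 := key 0; have h1 := key 1; have h2 := key (-1); have h3 := key 2
  have hc0 : M 0 1 * (M 0 1*M 2 1 - M 1 1^2) = 0 := by linear_combination h0
  have hc1 : M 0 1 * (M 0 1*M 2 2 + M 0 2*M 2 1 - 2*M 1 1*M 1 2)
      + M 0 2 * (M 0 1*M 2 1 - M 1 1^2) = 0 := by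
    linear_combination (-(1:ℂ)/2)*h0 + h1 - (1/3 : ℂ)*h2 - (1/6 : ℂ)*h3
  have hc2 : M 0 1 * (M 0 2*M 2 2 - M 1 2^2)
      + M 0 2 * (M 0 1*M 2 2 + M 0 2*M 2 1 - 2*M 1 1*M 1 2) = 0 := by
    linear_combination (-1 : ℂ)*h0 + (1/2 : ℂ)*h1 + (1/2 : ℂ)*h2
  have hc3 : M 0 2 * (M 0 2*M 2 2 - M 1 2^2) = 0 := by
    linear_combination ((1:ℂ)/2)*h0 - (1/2 : ℂ)*h1 - (1/6 : ℂ)*h2 + (1/6 : ℂ)*h3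
  have h012 : M 0 1 = 0 ∧ M 0 2 = 0 := by
    by_contra hcon
    rw [not_and_or] at hcon
    have hd : M 0 1 ≠ 0 ∨ M 0 2 ≠ 0 := hcon
    have habg : (M 0 1*M 2 1 - M 1 1^2) = 0 ∧ (M 0 1*M 2 2 + M 0 2*M 2 1 - 2*M 1 1*M 1 2) = 0
        ∧ (M 0 2*M 2 2 - M 1 2^2) = 0 := by
      rcases hd with h | h
      · have ha : M 0 1*M 2 1 - M 1 1^2 = 0 := (mul_eq_zero.mp hc0).resolve_left h
        have hb : M 0 1*M 2 2 + M 0 2*M 2 1 - 2*M 1 1*M 1 2 = 0 := by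
          have h' : M 0 1 * (M 0 1*M 2 2 + M 0 2*M 2 1 - 2*M 1 1*M 1 2) = 0 := by
            linear_combination hc1 - M 0 2 * ha
          exact (mul_eq_zero.mp h').resolve_left h
        have hg : M 0 2*M 2 2 - M 1 2^2 = 0 := by
          have h' : M 0 1 * (M 0 2*M 2 2 - M 1 2^2) = 0 := by
            linear_combination hc2 - M 0 2 * hb
          exact (mul_eq_zero.mp h').resolve_left h
        exact ⟨ha, hb, hg⟩
      · have hg : M 0 2*M 2 2 - M 1 2^2 = 0 := (mul_eq_zero.mp hc3).resolve_left h
        have hb : M 0 1*M 2 2 + M 0 2*M 2 1 - 2*M 1 1*M 1 2 = 0 := by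
          have h' : M 0 2 * (M 0 1*M 2 2 + M 0 2*M 2 1 - 2*M 1 1*M 1 2) = 0 := by
            linear_combination hc2 - M 0 1 * hg
          exact (mul_eq_zero.mp h').resolve_left h
        have ha : M 0 1*M 2 1 - M 1 1^2 = 0 := by
          have h' : M 0 2 * (M 0 1*M 2 1 - M 1 1^2) = 0 := by
            linear_combination hc1 - M 0 1 * hb
          exact (mul_eq_zero.mp h').resolve_left h
        exact ⟨ha, hb, hg⟩
    obtain ⟨ha, hb, hg⟩ := habg
    have hm1 : M 0 1*M 1 2 - M 0 2*M 1 1 = 0 := by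
      have hsq : (M 0 1*M 1 2 - M 0 2*M 1 1)^2 = 0 := by
        linear_combination (M 0 1*M 0 2)*hb - (M 0 1^2)*hg - (M 0 2^2)*ha
      exact pow_eq_zero_iff (two_ne_zero) |>.mp hsq
    have hm2 : M 0 1*M 2 2 - M 0 2*M 2 1 = 0 := by
      have hsq : (M 0 1*M 2 2 - M 0 2*M 2 1)^2 = 0 := by
        linear_combination ((M 0 1*M 2 2 + M 0 2*M 2 1 - 2*M 1 1*M 1 2) + 4*M 1 1*M 1 2)*hb
          - (4*(M 0 2*M 2 2 - M 1 2^2) + 4*M 1 2^2)*ha - (4*M 1 1^2)*hg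
      exact pow_eq_zero_iff (two_ne_zero) |>.mp hsq
    have hker : M.mulVec ![0, M 0 2, -(M 0 1)] = 0 := by
      funext i
      fin_cases i
      · show M.mulVec ![0, M 0 2, -(M 0 1)] 0 = 0
        rw [mulVec_entry]
        simp only [Matrix.cons_val_zero, Matrix.cons_val_one, Matrix.head_cons,
          Matrix.cons_val_two, Matrix.tail_cons]
        ring
      · show M.mulVec ![0, M 0 2, -(M 0 1)] 1 = 0
        rw [mulVec_entry]
        simp only [Matrix.cons_val_zero, Matrix.cons_val_one, Matrix.head_cons,
          Matrix.cons_val_two, Matrix.tail_cons]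
        linear_combination -hm1
      · show M.mulVec ![0, M 0 2, -(M 0 1)] 2 = 0
        rw [mulVec_entry]
        simp only [Matrix.cons_val_zero, Matrix.cons_val_one, Matrix.head_cons,
          Matrix.cons_val_two, Matrix.tail_cons]
        linear_combination -hm2
    have hv0 : (![0, M 0 2, -(M 0 1)] : Fin 3 → ℂ) ≠ 0 := by
      intro h
      rcases hd with hh | hh
      · exact hh (neg_eq_zero.mp (by simpa using congrFun h 2))
      · exact hh (by simpa using congrFun h 1)
    have hdet0 : M.det = 0 := Matrix.exists_mulVec_eq_zero_iff.mp ⟨_, hv0, hker⟩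
    rw [hdet] at hdet0
    exact one_ne_zero hdet0
  obtain ⟨hg01, hg02⟩ := h012
  have key2 : ∀ t : ℂ,
      M 0 0^2*(M 2 0 + M 2 1*t + M 2 2*t^2) - M 0 0*(M 1 0 + M 1 1*t + M 1 2*t^2)^2 = 0 := by
    intro t
    have h := hC ![1,t,t^2] (fun h => by simpa using congrFun h 0)
      (by show (1:ℂ)^2 * t^2 - 1 * t^2 = 0; ring)
    simp only [mulVec_entry, Matrix.cons_val_zero, Matrix.cons_val_one, Matrix.head_cons,
      Matrix.cons_val_two, Matrix.tail_cons, hg01, hg02] at h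
    linear_combination h
  have hq0 := key2 0; have hq1 := key2 1; have hqm1 := key2 (-1)
  have hq2 := key2 2; have hqm2 := key2 (-2)
  have hdet3 : M 0 0 * (M 1 1*M 2 2 - M 1 2*M 2 1) = 1 := by
    rw [Matrix.det_fin_three] at hdet
    linear_combination hdet + (M 1 0*M 2 2 - M 1 2*M 2 0)*hg01 - (M 1 0*M 2 1 - M 1 1*M 2 0)*hg02
  have h00 : M 0 0 ≠ 0 := left_ne_zero_of_mul_eq_one hdet3
  have hd4 : M 0 0 * M 1 2^2 = 0 := by
    linear_combination (-(1:ℂ)/4)*hq0 + (1/6 : ℂ)*hq1 + (1/6 : ℂ)*hqm1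
      - (1/24 : ℂ)*hq2 - (1/24 : ℂ)*hqm2
  have hg12 : M 1 2 = 0 :=
    pow_eq_zero_iff (two_ne_zero) |>.mp ((mul_eq_zero.mp hd4).resolve_left h00)
  have hdet4 : M 0 0 * (M 1 1*M 2 2) = 1 := by
    linear_combination hdet3 + (M 0 0*M 2 1)*hg12
  have h11 : M 1 1 ≠ 0 := by
    have : M 1 1 * (M 0 0*M 2 2) = 1 := by linear_combination hdet4
    exact left_ne_zero_of_mul_eq_one this
  have hd2 : M 0 0^2*M 2 2 - M 0 0*(M 1 1^2 + 2*M 1 0*M 1 2) = 0 := by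
    linear_combination (-(5:ℂ)/4)*hq0 + (2/3 : ℂ)*hq1 + (2/3 : ℂ)*hqm1
      - (1/24 : ℂ)*hq2 - (1/24 : ℂ)*hqm2
  have hR2 : M 0 0 * M 2 2 = M 1 1^2 := by
    have h' : M 0 0 * (M 0 0*M 2 2 - M 1 1^2) = 0 := by
      linear_combination hd2 + (2*M 0 0*M 1 0)*hg12
    have h'' := (mul_eq_zero.mp h').resolve_left h00
    linear_combination h''
  have hd1 : M 0 0^2*M 2 1 - 2*M 0 0*M 1 0*M 1 1 = 0 := by
    linear_combination (2/3 : ℂ)*hq1 - (2/3 : ℂ)*hqm1 - (1/12 : ℂ)*hq2 + (1/12 : ℂ)*hqm2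
  have hR1 : M 0 0 * M 2 1 = 2*M 1 0*M 1 1 := by
    have h' : M 0 0 * (M 0 0*M 2 1 - 2*M 1 0*M 1 1) = 0 := by linear_combination hd1
    have h'' := (mul_eq_zero.mp h').resolve_left h00
    linear_combination h''
  have hR0 : M 0 0 * M 2 0 = M 1 0^2 := by
    have h' : M 0 0 * (M 0 0*M 2 0 - M 1 0^2) = 0 := by linear_combination hq0
    have h'' := (mul_eq_zero.mp h').resolve_left h00
    linear_combination h''
  have comp : ∀ (v : Fin 3 → ℂ) (μ : ℂ), M.mulVec v = μ • v →
      (M 0 0*v 0 = μ*v 0) ∧ (M 1 0*v 0 + M 1 1*v 1 = μ*v 1)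
        ∧ (M 2 0*v 0 + M 2 1*v 1 + M 2 2*v 2 = μ*v 2) := by
    intro v μ h
    have e0 : M 0 0 * v 0 + M 0 1 * v 1 + M 0 2 * v 2 = μ * v 0 := by
      have h' := congrFun h 0; rw [mulVec_entry] at h'; exact h'
    have e1 : M 1 0 * v 0 + M 1 1 * v 1 + M 1 2 * v 2 = μ * v 1 := by
      have h' := congrFun h 1; rw [mulVec_entry] at h'; exact h'
    have e2 : M 2 0 * v 0 + M 2 1 * v 1 + M 2 2 * v 2 = μ * v 2 := by
      have h' := congrFun h 2; rw [mulVec_entry] at h'; exact h'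
    exact ⟨by linear_combination e0 - v 1*hg01 - v 2*hg02,
      by linear_combination e1 - v 2*hg12, e2⟩
  by_cases hsc : M 1 0 = 0 ∧ M 1 1 = M 0 0
  · exfalso
    apply hns
    refine ⟨M 0 0, ?_⟩
    have hg20 : M 2 0 = 0 := by
      have h' : M 0 0 * M 2 0 = 0 := by rw [hR0, hsc.1]; ring
      exact (mul_eq_zero.mp h').resolve_left h00
    have hg21 : M 2 1 = 0 := by
      have h' : M 0 0 * M 2 1 = 0 := by rw [hR1, hsc.1]; ring
      exact (mul_eq_zero.mp h').resolve_left h00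
    have hg22 : M 2 2 = M 0 0 := by
      have h' : M 0 0 * (M 2 2 - M 0 0) = 0 := by
        linear_combination hR2 + (M 1 1 + M 0 0)*hsc.2
      have h'' := (mul_eq_zero.mp h').resolve_left h00
      linear_combination h''
    ext i j
    fin_cases i <;> fin_cases j <;>
      simp [Matrix.smul_apply, Matrix.one_apply, hg01, hg02, hg12, hg20, hg21, hg22,
        hsc.1, hsc.2]
  · by_cases hq : M 1 1 = M 0 0
    · have hp : M 1 0 ≠ 0 := fun h => hsc ⟨h, hq⟩
      refine ⟨0, ?_⟩
      rintro v hv hFv ⟨μ, hμ⟩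
      obtain ⟨e0, e1, e2⟩ := comp v μ hμ
      have hx0 : v 0 = 0 := by
        by_contra hx
        have hμ0 : μ = M 0 0 := by
          have h' : (M 0 0 - μ)*v 0 = 0 := by linear_combination e0
          have h'' := (mul_eq_zero.mp h').resolve_right hx
          linear_combination -h''
        have h' : M 1 0 * v 0 = 0 := by
          linear_combination e1 + v 1*hμ0 - v 1*hq
        exact hx ((mul_eq_zero.mp h').resolve_left hp)
      have hy0 : v 1 = 0 := by
        by_contra hy
        have hμ1 : μ = M 1 1 := by
          have h' : (M 1 1 - μ)*v 1 = 0 := by linear_combination e1 - M 1 0*hx0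
          have h'' := (mul_eq_zero.mp h').resolve_right hy
          linear_combination -h''
        have h' : 2*(M 1 0*(M 1 1*v 1)) = 0 := by
          linear_combination (M 0 0)*e2 - v 1*hR1 - v 2*hR2 - (M 0 0*M 2 0)*hx0
            + (v 2*M 0 0)*hμ1 - (v 2*M 1 1)*hq
        have h1' := (mul_eq_zero.mp h').resolve_left (two_ne_zero)
        have h2' := (mul_eq_zero.mp h1').resolve_left hp
        exact hy ((mul_eq_zero.mp h2').resolve_left h11)
      exact Or.inl ⟨hx0, hy0⟩
    · have hne : M 0 0 - M 1 1 ≠ 0 := sub_ne_zero.mpr (fun h => hq h.symm)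
      refine ⟨M 1 0 / (M 0 0 - M 1 1), ?_⟩
      rintro v hv hFv ⟨μ, hμ⟩
      obtain ⟨e0, e1, e2⟩ := comp v μ hμ
      by_cases hx : v 0 = 0
      · by_cases hy : v 1 = 0
        · exact Or.inl ⟨hx, hy⟩
        · right
          have hμ1 : μ = M 1 1 := by
            have h' : (M 1 1 - μ)*v 1 = 0 := by linear_combination e1 - M 1 0*hx
            have h'' := (mul_eq_zero.mp h').resolve_right hy
            linear_combination -h''
          have h' : M 1 1*((M 0 0 - M 1 1)*v 2 - 2*(M 1 0*v 1)) = 0 := by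
            linear_combination (-(M 0 0))*e2 + v 1*hR1 + v 2*hR2 + (M 0 0*M 2 0)*hx
              - (M 0 0*v 2)*hμ1
          have h'' := (mul_eq_zero.mp h').resolve_left h11
          rw [hx]
          field_simp
          linear_combination (M 0 0 - M 1 1) * h''
      · right
        have hμ0 : μ = M 0 0 := by
          have h' : (M 0 0 - μ)*v 0 = 0 := by linear_combination e0
          have h'' := (mul_eq_zero.mp h').resolve_right hx
          linear_combination -h''
        have hy : (M 0 0 - M 1 1)*v 1 = M 1 0*v 0 := by
          linear_combination -e1 - v 1*hμ0
        have hyk : v 1 = (M 1 0/(M 0 0 - M 1 1))*v 0 := by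
          rw [div_mul_eq_mul_div, eq_div_iff hne]
          linear_combination hy
        have hz2 : v 0^2*(v 2 - (M 1 0/(M 0 0 - M 1 1))^2*v 0) = 0 := by
          linear_combination hFv + (v 0*(v 1 + (M 1 0/(M 0 0 - M 1 1))*v 0))*hyk
        have hz3 : v 2 = (M 1 0/(M 0 0 - M 1 1))^2*v 0 := by
          have h'' := (mul_eq_zero.mp hz2).resolve_left (pow_ne_zero 2 hx)
          linear_combination h''
        rw [hz3, hyk]
        ring

/-- If marked points on the conic-plus-tangent-line cubic have infinite `SL(3,ℂ)`
stabilizer, then there is a `k ∈ ℂ` such that every marked point is the tacnode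
`(0:0:1)` or lies on the tangent line `{z = -k²·x + 2k·y}`. -/
theorem conic_tangent_line_stabilizer (n : ℕ) (p : Fin n → P2)
    (hp : ∀ i, p i ∈ Ctan)
    (hstab : {g : SL3 | act g '' Ctan = Ctan ∧ ∀ i, act g (p i) = p i}.Infinite) :
    ∃ k : ℂ, ∀ i, p i = tacnode ∨
      (p i).rep 2 = -k ^ 2 * (p i).rep 0 + 2 * k * (p i).rep 1 := by
  classical
  have hne : ¬ ({g : SL3 | act g '' Ctan = Ctan ∧ ∀ i, act g (p i) = p i}
      ⊆ {g : SL3 | ∃ c : ℂ, (g : Matrix (Fin 3) (Fin 3) ℂ) = c • 1}) :=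
    fun hsub => hstab (scalar_finite.subset hsub)
  rw [Set.not_subset] at hne
  obtain ⟨g, hg, hgns⟩ := hne
  set M : Matrix (Fin 3) (Fin 3) ℂ := (g : Matrix (Fin 3) (Fin 3) ℂ) with hM
  have hC : ∀ v : Fin 3 → ℂ, v ≠ 0 → v 0 ^ 2 * v 2 - v 0 * v 1 ^ 2 = 0 →
      (M.mulVec v) 0 ^ 2 * (M.mulVec v) 2 - (M.mulVec v) 0 * (M.mulVec v) 1 ^ 2 = 0 := by
    intro v hv hF
    have h1 : Projectivization.mk ℂ v hv ∈ Ctan := (mem_Ctan_mk v hv).mpr hF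
    have h2 : act g (Projectivization.mk ℂ v hv) ∈ Ctan := by
      rw [← hg.1]; exact Set.mem_image_of_mem _ h1
    rw [act_mk] at h2
    exact (mem_Ctan_mk _ (mulVec_ne_zero g hv)).mp h2
  obtain ⟨k, hk⟩ := core M g.2 hC hgns
  refine ⟨k, fun i => ?_⟩
  have hrep : (p i).rep ≠ 0 := Projectivization.rep_nonzero _
  have hF : (p i).rep 0 ^ 2 * (p i).rep 2 - (p i).rep 0 * (p i).rep 1 ^ 2 = 0 := hp i
  have hfix : ∃ μ : ℂ, M.mulVec (p i).rep = μ • (p i).rep := by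
    have h2 : Projectivization.mk ℂ (M.mulVec (p i).rep) (mulVec_ne_zero g hrep)
        = Projectivization.mk ℂ (p i).rep hrep := by
      rw [← act_mk, Projectivization.mk_rep]
      exact hg.2 i
      exact hrep
    obtain ⟨a, ha⟩ := (Projectivization.mk_eq_mk_iff' ℂ _ _ _ _).mp h2
    exact ⟨a, ha.symm⟩
  rcases hk (p i).rep hrep hF hfix with ⟨hx0, hy0⟩ | h
  · left
    have hz : (p i).rep 2 ≠ 0 := by
      intro hz0
      apply hrep
      funext j
      fin_cases j
      · exact hx0
      · exact hy0
      · exact hz0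
    rw [← Projectivization.mk_rep (p i)]
    unfold tacnode
    rw [Projectivization.mk_eq_mk_iff']
    refine ⟨(p i).rep 2, ?_⟩
    funext j
    fin_cases j <;> simp [hx0, hy0]
  · right; exact h
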